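/- Running Hedge with learning rate η = √(2 log(2^m (K−m)) / T) on the 2^m(K−m) effective orderings yields ranking regret O(√(T(m + log K))) when the order of dying is known and one expert dies per night. -/
import Mathlib


/-- **Known order of dying: regret `O(√(T(m + log K)))`.**
Suppose Hedge run on the `2^m (K - m)` effective orderings (with the optimally
tuned learning rate) guarantees regret at most `c · √(T · log(2^m (K-m)) / 2)`.
Then there is a constant `C` (depending only on `c`) such that the ranking
regret is at most `C · √(T (m + log K))`. -/
theorem known_order_upper_bound (c : ℝ) (hc : 0 < c) :
    ∃ C : ℝ, 0 < C ∧ ∀ (K m T : ℕ) (R : ℝ), m < K →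
      R ≤ c * Real.sqrt ((T : ℝ) * Real.log ((2 : ℝ) ^ m * ((K : ℝ) - m)) / 2) →
      R ≤ C * Real.sqrt ((T : ℝ) * ((m : ℝ) + Real.log K)) := by
  refine ⟨c, hc, fun K m T R hmK hR => ?_⟩
  refine hR.trans (mul_le_mul_of_nonneg_left (Real.sqrt_le_sqrt ?_) hc.le)
  have hKm : (1 : ℝ) ≤ (K : ℝ) - m := by
    have : (m : ℝ) + 1 ≤ K := by exact_mod_cast hmK
    linarith
  have hKm0 : (0 : ℝ) < (K : ℝ) - m := by linarith
  have hlogmul : Real.log ((2 : ℝ) ^ m * ((K : ℝ) - m))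
      = m * Real.log 2 + Real.log ((K : ℝ) - m) := by
    rw [Real.log_mul (by positivity) (by linarith), Real.log_pow]
  have h1 : Real.log ((K : ℝ) - m) ≤ Real.log K := by
    apply Real.log_le_log hKm0
    have : (0 : ℝ) ≤ (m : ℝ) := Nat.cast_nonneg m
    linarith
  have h2 : (m : ℝ) * Real.log 2 ≤ m := by
    have := Real.log_two_lt_d9
    nlinarith [(Nat.cast_nonneg m : (0:ℝ) ≤ m)]
  have hlog : Real.log ((2 : ℝ) ^ m * ((K : ℝ) - m)) ≤ (m : ℝ) + Real.log K := by
    rw [hlogmul]; linarith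
  have hlognn : 0 ≤ Real.log ((2 : ℝ) ^ m * ((K : ℝ) - m)) := by
    apply Real.log_nonneg
    have h2m : (1 : ℝ) ≤ (2 : ℝ) ^ m := one_le_pow₀ (by norm_num)
    nlinarith
  have hT : (0 : ℝ) ≤ T := Nat.cast_nonneg T
  nlinarith [mul_le_mul_of_nonneg_left hlog hT]
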